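/- Let G be a simple d-regular digraph with d ≥ 2 and N = |V_G| vertices, and let (G,A_G) be a bandwidth optimal reduce-scatter algorithm. Then for every n ≥ 0, T_B(A_{L^n(G)},M,B) / [(M/B)·(d^n·N − 1)/(d^n·N)] ≤ 1 + 1/((d−1)·N); that is, the n-fold line-graph expansion is within a factor 1 + 1/((d−1)N) of the optimal bandwidth runtime on d^n·N nodes. -/

import Mathlib

open MeasureTheory

namespace Collective

/-- A communication tuple `((w,C),(u,v),t)`. -/
abbrev Tup (V : Type*) := V × Set ℝ × (V × V) × ℕ

/-- A schedule is a set of communication tuples. -/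
abbrev Sched (V : Type*) := Set (Tup V)

/-- The data shard, identified with the interval `[0,1)`. -/
def shard : Set ℝ := Set.Ico (0 : ℝ) 1

/-- `A` is a valid (finite) schedule on the digraph with edge relation `E`:
every tuple uses an edge, its chunk is a measurable subset of the shard, and
its communication step is at least `1`. -/
def IsSched {V : Type*} (E : V → V → Prop) (A : Sched V) : Prop :=
  A.Finite ∧ ∀ p ∈ A, E p.2.2.1.1 p.2.2.1.2 ∧ p.2.1 ⊆ shard ∧
    MeasurableSet p.2.1 ∧ 1 ≤ p.2.2.2

/-- The maximum communication step occurring in a schedule. -/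
noncomputable def tmax {V : Type*} (A : Sched V) : ℕ :=
  sSup {t | ∃ p ∈ A, p.2.2.2 = t}

/-- `A` is a reduce-scatter schedule. -/
def IsReduceScatter {V : Type*} (A : Sched V) : Prop :=
  ∀ u v : V, u ≠ v → ∀ x ∈ shard,
    ∃ (m : ℕ) (w : Fin (m + 1) → V) (C : Fin m → Set ℝ) (t : Fin m → ℕ),
      w 0 = u ∧ w (Fin.last m) = v ∧ StrictMono t ∧
      ∀ i : Fin m, (v, C i, (w i.castSucc, w i.succ), t i) ∈ A ∧ x ∈ C i

/-- `A` is an allgather schedule. -/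
def IsAllgather {V : Type*} (A : Sched V) : Prop :=
  ∀ u v : V, u ≠ v → ∀ x ∈ shard,
    ∃ (m : ℕ) (w : Fin (m + 1) → V) (C : Fin m → Set ℝ) (t : Fin m → ℕ),
      w 0 = u ∧ w (Fin.last m) = v ∧ StrictMono t ∧
      ∀ i : Fin m, (u, C i, (w i.castSucc, w i.succ), t i) ∈ A ∧ x ∈ C i

/-- A digraph is `d`-regular if every vertex has out-degree `d` and in-degree `d`. -/
def IsRegular {V : Type*} (E : V → V → Prop) (d : ℕ) : Prop :=
  ∀ v : V, {w | E v w}.ncard = d ∧ {w | E w v}.ncard = d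

/-- Node latency `T_L(A) = t_max · α`. -/
noncomputable def latT {V : Type*} (α : ℝ) (A : Sched V) : ℝ := (tmax A : ℝ) * α

/-- Total chunk length sent over edge `e` at step `t`. -/
noncomputable def edgeLoad {V : Type*} (A : Sched V) (e : V × V) (t : ℕ) : ℝ :=
  ∑ᶠ p ∈ {p : Tup V | p ∈ A ∧ p.2.2.1 = e ∧ p.2.2.2 = t}, (volume p.2.1).toReal

/-- Bandwidth runtime of step `t`:
`T_B(A_t,M,B) = (d/B)·(M/N)·max_{(u,v)∈E} Σ_{((w,C),(u,v),t)∈A_t} |C|`. -/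
noncomputable def stepT {V : Type*} (E : V → V → Prop) (d : ℕ) (M B : ℝ)
    (A : Sched V) (t : ℕ) : ℝ :=
  ((d : ℝ) / B) * (M / (Nat.card V : ℝ)) *
    sSup ((fun e => edgeLoad A e t) '' {e : V × V | E e.1 e.2})

/-- Bandwidth runtime `T_B(A,M,B) = Σ_{t=1}^{t_max} T_B(A_t,M,B)`. -/
noncomputable def bwT {V : Type*} (E : V → V → Prop) (d : ℕ) (M B : ℝ)
    (A : Sched V) : ℝ :=
  ∑ t ∈ Finset.Icc 1 (tmax A), stepT E d M B A t

/-- There is a directed walk of length `n` from `u` to `v`. -/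
def HasWalk {V : Type*} (E : V → V → Prop) (u v : V) (n : ℕ) : Prop :=
  ∃ w : Fin (n + 1) → V, w 0 = u ∧ w (Fin.last n) = v ∧
    ∀ i : Fin n, E (w i.castSucc) (w i.succ)

/-- Strong connectivity. -/
def StronglyConnected {V : Type*} (E : V → V → Prop) : Prop :=
  ∀ u v : V, ∃ n, HasWalk E u v n

/-- Directed graph distance: the length of a shortest directed walk. -/
noncomputable def dist {V : Type*} (E : V → V → Prop) (u v : V) : ℕ :=
  sInf {n | HasWalk E u v n}

/-- Diameter `D(G) = max_{u,v} d(u,v)`. -/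
noncomputable def diam {V : Type*} (E : V → V → Prop) : ℕ :=
  sSup {n | ∃ u v : V, dist E u v = n}

/-- `A` is a shortest-path (reduce-scatter style) schedule:
`((v,C),(u,w),t) ∈ A` iff `d(u,v) = d(w,v)+1 = D(G)+1−t`. -/
def IsShortestPathSched {V : Type*} (E : V → V → Prop) (A : Sched V) : Prop :=
  (∀ (v : V) (C : Set ℝ) (u w : V) (t : ℕ), (v, C, (u, w), t) ∈ A →
      dist E u v = dist E w v + 1 ∧ dist E u v + t = diam E + 1) ∧
  (∀ (v u w : V) (t : ℕ), E u w → dist E u v = dist E w v + 1 →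
      dist E u v + t = diam E + 1 → ∃ C : Set ℝ, (v, C, (u, w), t) ∈ A)

/-- The transpose digraph. -/
def transpose {V : Type*} (E : V → V → Prop) : V → V → Prop := fun u v => E v u

/-- The reverse schedule `A^T`: `((w,C),(v,u),t_max−t+1) ∈ A^T` iff `((w,C),(u,v),t) ∈ A`. -/
noncomputable def reverseSched {V : Type*} (A : Sched V) : Sched V :=
  (fun q : Tup V => (q.1, q.2.1, (q.2.2.1.2, q.2.2.1.1), tmax A + 1 - q.2.2.2)) '' A

/-- The schedule obtained by relabeling vertices along `f`. -/
def mapSched {V : Type*} (f : V ≃ V) (A : Sched V) : Sched V :=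
  (fun q : Tup V => (f q.1, q.2.1, (f q.2.2.1.1, f q.2.2.1.2), q.2.2.2)) '' A

/-- The vertex set of the line graph `L(G)`: the edges of `G`. -/
def lineV {V : Type*} (E : V → V → Prop) : Type _ := {e : V × V // E e.1 e.2}

/-- The edge relation of the line graph: `uu' → vv'` iff `u' = v`. -/
def lineE {V : Type*} (E : V → V → Prop) : lineV E → lineV E → Prop :=
  fun e f => e.1.2 = f.1.1

/-- The line-graph-expanded schedule `A_{L(G)}`. -/
noncomputable def lineSched {V : Type*} (E : V → V → Prop) (A : Sched V) :
    Sched (lineV E) :=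
  {p | (∃ (v v' w u u' : V) (C : Set ℝ) (t : ℕ)
          (hvv' : E v v') (hwu : E w u) (huu' : E u u'),
          (v, C, (u, u'), t) ∈ A ∧ (v, v') ≠ (w, u) ∧
          p = (⟨(v, v'), hvv'⟩, C, (⟨(w, u), hwu⟩, ⟨(u, u'), huu'⟩), t))
     ∨ (∃ (u v v' : V) (huv : E u v) (hvv' : E v v'),
          (u, v) ≠ (v, v') ∧
          p = (⟨(v, v'), hvv'⟩, shard, (⟨(u, v), huv⟩, ⟨(v, v'), hvv'⟩), tmax A + 1))}

/-- A digraph bundled with a schedule, used to iterate line graph expansion. -/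
structure Alg : Type 1 where
  V : Type
  E : V → V → Prop
  A : Sched V

/-- One application of line graph expansion to a bundled algorithm. -/
noncomputable def lineAlg (G : Alg) : Alg :=
  ⟨lineV G.E, lineE G.E, lineSched G.E G.A⟩

/-- The degree-expanded digraph `G*n`. -/
def degE {V : Type*} (E : V → V → Prop) (n : ℕ) :
    (V × Fin n) → (V × Fin n) → Prop :=
  fun a b => E a.1 b.1

/-- The degree-expanded schedule `A_{G*n}`, relative to an enumeration `enum` of the
out-edges of each vertex of `G*n`. -/
noncomputable def degSched {V : Type*} (A : Sched V) (n d : ℕ)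
    (enum : V × Fin n → Fin (n * d) → V × Fin n) : Sched (V × Fin n) :=
  {p | (∃ (u : V) (i j : Fin n) (β : Fin (n * d)), i ≠ j ∧
          p = ((u, j),
               Set.Ico (((β : ℕ) : ℝ) / ((n : ℝ) * (d : ℝ)))
                 ((((β : ℕ) : ℝ) + 1) / ((n : ℝ) * (d : ℝ))),
               ((u, i), enum (u, i) β), 1))
     ∨ (∃ (w u v : V) (C : Set ℝ) (t : ℕ) (i j : Fin n),
          (w, C, (u, v), t) ∈ A ∧ p = ((w, j), C, ((u, i), (v, j)), t + 1))}

/-- The edge relation of the Cartesian power `G^{□n}`. -/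
def powE {V : Type*} (E : V → V → Prop) (n : ℕ) :
    (Fin n → V) → (Fin n → V) → Prop :=
  fun u v => ∃ j : Fin n, E (u j) (v j) ∧ ∀ k : Fin n, k ≠ j → u k = v k

/-- Cyclic rotation of coordinates by `i`. -/
def rot {V : Type*} {n : ℕ} (i : Fin n) (v : Fin n → V) : Fin n → V :=
  fun k => v (k - i)

/-- The Cartesian power allgather schedule `A_{G^{□n}}`: the `i`-th of the `n` schedules
`A^{(i)}` (a coordinate rotation of `A^{(1)}`) is run on the `i`-th equal subshard. -/
noncomputable def powSched {V : Type*} (A : Sched V) (n : ℕ) : Sched (Fin n → V) :=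
  {p | ∃ (i j : Fin n) (w u v : V) (C : Set ℝ) (t : ℕ) (a b : Fin n → V),
        (w, C, (u, v), t) ∈ A ∧ a j = w ∧ b j = u ∧ (∀ k : Fin n, j < k → a k = b k) ∧
        p = (rot i a, (fun x : ℝ => (((i : ℕ) : ℝ) + x) / (n : ℝ)) '' C,
             (rot i b, rot i (Function.update b j v)), t + (j : ℕ) * tmax A)}

/-- The edge relation of the Cartesian product `G₁□⋯□G_n` of a family of digraphs. -/
def boxE {n : ℕ} {V : Fin n → Type*} (E : ∀ i, V i → V i → Prop) :
    (∀ i, V i) → (∀ i, V i) → Prop :=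
  fun u v => ∃ j : Fin n, E j (u j) (v j) ∧ ∀ k : Fin n, k ≠ j → u k = v k

/-- The generalized Kautz digraph `Π_{d,m}` on `ℤ/mℤ`:
`x → y` iff `y ≡ −d·x − a (mod m)` for some `a ∈ {1,…,d}`. -/
def kautzE (d m : ℕ) : ZMod m → ZMod m → Prop :=
  fun x y => ∃ a : ℕ, 1 ≤ a ∧ a ≤ d ∧ y = -(d : ZMod m) * x - (a : ZMod m)

end Collective
namespace Collective


/-! ### Auxiliary lemmas -/

section Aux
variable {V : Type*}

lemma volume_shard_toReal : (volume shard).toReal = 1 := by simp [shard]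

lemma steps_eq_image (A : Sched V) :
    {t | ∃ p ∈ A, p.2.2.2 = t} = (fun p : Tup V => p.2.2.2) '' A := rfl

lemma step_le_tmax {A : Sched V} (hA : A.Finite) {p : Tup V} (hp : p ∈ A) :
    p.2.2.2 ≤ tmax A :=
  le_csSup ((steps_eq_image A ▸ (hA.image _)).bddAbove) ⟨p, hp, rfl⟩

lemma loadSet_finite {A : Sched V} (hA : A.Finite) (e : V × V) (t : ℕ) :
    {p : Tup V | p ∈ A ∧ p.2.2.1 = e ∧ p.2.2.2 = t}.Finite :=
  hA.subset (fun _ hp => hp.1)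

lemma edgeLoad_eq_sum {A : Sched V} (hA : A.Finite) (e : V × V) (t : ℕ) :
    edgeLoad A e t = ∑ p ∈ (loadSet_finite hA e t).toFinset, (volume p.2.1).toReal := by
  rw [edgeLoad, ← finsum_mem_coe_finset, Set.Finite.coe_toFinset]

lemma edgeLoad_nonneg {A : Sched V} (hA : A.Finite) (e : V × V) (t : ℕ) :
    0 ≤ edgeLoad A e t := by
  rw [edgeLoad_eq_sum hA]
  exact Finset.sum_nonneg fun _ _ => ENNReal.toReal_nonneg

variable {E : V → V → Prop} {d : ℕ}

instance [Finite V] : Finite (lineV E) := by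
  unfold lineV; infer_instance

lemma lineV_nonempty [Nonempty V] (hreg : IsRegular E d) (hd : 1 ≤ d) :
    Nonempty (lineV E) := by
  obtain ⟨v⟩ := ‹Nonempty V›
  have h1 := (hreg v).1
  have : {w | E v w}.Nonempty := by
    apply Set.nonempty_of_ncard_ne_zero; omega
  obtain ⟨w, hw⟩ := this
  exact ⟨⟨(v, w), hw⟩⟩

lemma line_simple (hs : ∀ v, ¬ E v v) : ∀ e : lineV E, ¬ lineE E e e := by
  rintro ⟨⟨u, v⟩, huv⟩ h
  have : v = u := h
  subst this
  exact hs _ huv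

lemma line_regular (hreg : IsRegular E d) : IsRegular (lineE E) d := by
  intro e
  constructor
  · have h1 := (hreg e.1.2).1
    have eqv : {f : lineV E | lineE E e f} ≃ {w | E e.1.2 w} :=
      { toFun := fun f => ⟨f.1.1.2, by
          have h2 := f.1.2
          have h3 : e.1.2 = f.1.1.1 := f.2
          rw [h3]; exact h2⟩
        invFun := fun w => ⟨⟨(e.1.2, w.1), w.2⟩, rfl⟩
        left_inv := by
          rintro ⟨⟨⟨a, b⟩, hab⟩, hf⟩
          have h3 : e.1.2 = a := hf
          subst h3; rfl
        right_inv := fun w => rfl }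
    rw [← Nat.card_coe_set_eq, Nat.card_congr eqv, Nat.card_coe_set_eq]
    exact h1
  · have h1 := (hreg e.1.1).2
    have eqv : {f : lineV E | lineE E f e} ≃ {w | E w e.1.1} :=
      { toFun := fun f => ⟨f.1.1.1, by
          have h2 := f.1.2
          have h3 : f.1.1.2 = e.1.1 := f.2
          rw [← h3]; exact h2⟩
        invFun := fun w => ⟨⟨(w.1, e.1.1), w.2⟩, rfl⟩
        left_inv := by
          rintro ⟨⟨⟨a, b⟩, hab⟩, hf⟩
          have h3 : b = e.1.1 := hf
          subst h3; rfl
        right_inv := fun w => rfl }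
    rw [← Nat.card_coe_set_eq, Nat.card_congr eqv, Nat.card_coe_set_eq]
    exact h1

lemma card_lineV [Finite V] (hreg : IsRegular E d) :
    Nat.card (lineV E) = d * Nat.card V := by
  have := Fintype.ofFinite V
  classical
  have eqv : lineV E ≃ Σ v : V, {w // E v w} :=
    { toFun := fun e => ⟨e.1.1, e.1.2, e.2⟩
      invFun := fun x => ⟨(x.1, x.2.1), x.2.2⟩
      left_inv := fun e => rfl
      right_inv := fun x => rfl }
  have hcard : ∀ v : V, Fintype.card {w // E v w} = d := by
    intro v
    have h := (hreg v).1
    rw [← Nat.card_coe_set_eq, Nat.card_eq_fintype_card] at h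
    exact h
  rw [Nat.card_congr eqv, Nat.card_eq_fintype_card, Fintype.card_sigma]
  simp [hcard, Nat.card_eq_fintype_card, mul_comm]

lemma lineSched_finite [Finite V] {A : Sched V} (hA : A.Finite) :
    (lineSched E A).Finite := by
  apply Set.Finite.subset
    (s := (Set.univ : Set (lineV E)) ×ˢ
      (((fun q : Tup V => q.2.1) '' A ∪ {shard}) ×ˢ
        ((Set.univ : Set (lineV E × lineV E)) ×ˢ (Set.Iic (tmax A + 1)))))
  · exact Set.Finite.prod (Set.finite_univ)
      (Set.Finite.prod ((hA.image _).union (Set.finite_singleton _))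
        (Set.Finite.prod Set.finite_univ (Set.finite_Iic _)))
  · rintro p (⟨v, v', w, u, u', C, t, hvv', hwu, huu', hq, hne, rfl⟩ |
      ⟨u, v, v', huv, hvv', hne, rfl⟩)
    · refine ⟨trivial, Or.inl ⟨_, hq, rfl⟩, trivial, ?_⟩
      have ht : t ≤ tmax A := step_le_tmax hA hq
      exact Set.mem_Iic.2 (show t ≤ tmax A + 1 by omega)
    · exact ⟨trivial, Or.inr rfl, trivial, Set.mem_Iic.2 (le_refl _)⟩

lemma exists_two_walk [Nonempty V] (hreg : IsRegular E d) (hd : 1 ≤ d)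
    (hs : ∀ v, ¬ E v v) :
    ∃ u v v' : V, ∃ (huv : E u v) (hvv' : E v v'), (u, v) ≠ (v, v') := by
  obtain ⟨v⟩ := ‹Nonempty V›
  obtain ⟨u, hu⟩ : {w | E w v}.Nonempty := by
    apply Set.nonempty_of_ncard_ne_zero; have := (hreg v).2; omega
  obtain ⟨v', hv'⟩ : {w | E v w}.Nonempty := by
    apply Set.nonempty_of_ncard_ne_zero; have := (hreg v).1; omega
  refine ⟨u, v, v', hu, hv', ?_⟩
  intro h
  have h1 : u = v := congrArg Prod.fst h
  subst h1
  exact hs u hu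

lemma tmax_lineSched [Finite V] [Nonempty V] {A : Sched V} (hA : A.Finite)
    (hreg : IsRegular E d) (hd : 1 ≤ d) (hs : ∀ v, ¬ E v v) :
    tmax (lineSched E A) = tmax A + 1 := by
  obtain ⟨u, v, v', huv, hvv', hne⟩ := exists_two_walk hreg hd hs
  have hmem : ((⟨(v, v'), hvv'⟩ : lineV E), shard,
      ((⟨(u, v), huv⟩ : lineV E), (⟨(v, v'), hvv'⟩ : lineV E)), tmax A + 1) ∈
      lineSched E A := Or.inr ⟨u, v, v', huv, hvv', hne, rfl⟩
  have hmem' : (tmax A + 1) ∈ {t | ∃ p ∈ lineSched E A, p.2.2.2 = t} :=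
    ⟨_, hmem, rfl⟩
  apply le_antisymm
  · apply csSup_le ⟨tmax A + 1, hmem'⟩
    rintro t ⟨p, hp, rfl⟩
    rcases hp with ⟨_, _, _, _, _, _, t', _, _, _, hq, _, rfl⟩ |
      ⟨_, _, _, _, _, _, rfl⟩
    · have ht : t' ≤ tmax A := step_le_tmax hA hq
      show t' ≤ tmax A + 1
      omega
    · exact le_refl _
  · exact le_csSup ((steps_eq_image _ ▸ ((lineSched_finite hA).image _)).bddAbove)
      ⟨_, hmem, rfl⟩

lemma edgeLoad_line_le [Finite V] {A : Sched V} (hA : A.Finite)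
    (hreg : IsRegular E d) (ε1 ε2 : lineV E) {t : ℕ} (ht : t ≤ tmax A) :
    edgeLoad (lineSched E A) (ε1, ε2) t ≤ d * edgeLoad A ε2.1 t := by
  classical
  have hLfin := lineSched_finite (E := E) hA
  set m : Tup (lineV E) → ℝ := fun p => (volume p.2.1).toReal with hm
  set mV : Tup V → ℝ := fun q => (volume q.2.1).toReal with hmV
  set h' : Tup (lineV E) → Σ _ : Tup V, V :=
    fun p => ⟨(p.1.1.1, p.2.1, ε2.1, t), p.1.1.2⟩ with hh'
  set nbr : V → Finset V := fun v => ({w | E v w}.toFinite).toFinset with hnbr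
  set SL := (loadSet_finite hLfin (ε1, ε2) t).toFinset with hSL
  set SA := (loadSet_finite hA ε2.1 t).toFinset with hSA
  have hchar : ∀ p ∈ SL, (p.1.1.1, p.2.1, ε2.1, t) ∈ A ∧ E p.1.1.1 p.1.1.2 ∧
      p.2.2.1 = (ε1, ε2) ∧ p.2.2.2 = t := by
    intro p hp
    rw [hSL, Set.Finite.mem_toFinset] at hp
    obtain ⟨hmem, hedge, hstep⟩ := hp
    rcases hmem with ⟨v, v', w, u, u', C, t₁, hvv', hwu, huu', hq, hne, rfl⟩ |
      ⟨u, v, v', huv, hvv', hne, rfl⟩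
    · simp only [Prod.mk.injEq] at hedge
      obtain ⟨he1, he2⟩ := Prod.mk.inj hedge
      have he2' : (u, u') = ε2.1 := congrArg Subtype.val he2
      have hstep' : t₁ = t := hstep
      refine ⟨?_, hvv', by rw [he1, he2], hstep⟩
      show (v, C, ε2.1, t) ∈ A
      rw [← he2', ← hstep']
      exact hq
    · exfalso
      have hstep' : tmax A + 1 = t := hstep
      omega
  have hinj : ∀ p ∈ SL, ∀ p' ∈ SL, h' p = h' p' → p = p' := by
    intro p hp p' hp' heq
    obtain ⟨-, -, he, hst⟩ := hchar p hp
    obtain ⟨-, -, he', hst'⟩ := hchar p' hp'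
    have hfeq := congrArg (fun x : Σ _ : Tup V, V => x.1) heq
    have h3 := congrArg (fun x : Σ _ : Tup V, V => x.2) heq
    simp only [hh', Prod.mk.injEq] at hfeq
    obtain ⟨h1, h2, -⟩ := hfeq
    simp only [hh'] at h3
    have hfst : p.1 = p'.1 := Subtype.ext (Prod.ext h1 h3)
    exact Prod.ext hfst (Prod.ext h2 (Prod.ext (he.trans he'.symm)
      (hst.trans hst'.symm)))
  have him : SL.image h' ⊆ SA.sigma (fun q => nbr q.1) := by
    intro x hx
    rw [Finset.mem_image] at hx
    obtain ⟨p, hp, rfl⟩ := hx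
    obtain ⟨hq, hE, -, -⟩ := hchar p hp
    rw [Finset.mem_sigma]
    refine ⟨?_, ?_⟩
    · rw [hSA, Set.Finite.mem_toFinset]; exact ⟨hq, rfl, rfl⟩
    · rw [hnbr]; rw [Set.Finite.mem_toFinset]; exact hE
  have hcard : ∀ v : V, (nbr v).card = d := by
    intro v
    have h := (hreg v).1
    rw [Set.ncard_eq_toFinset_card] at h
    exact h
  calc edgeLoad (lineSched E A) (ε1, ε2) t
      = ∑ p ∈ SL, m p := edgeLoad_eq_sum hLfin _ _
    _ = ∑ x ∈ SL.image h', mV x.1 := by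
        rw [Finset.sum_image hinj]
    _ ≤ ∑ x ∈ SA.sigma (fun q => nbr q.1), mV x.1 :=
        Finset.sum_le_sum_of_subset_of_nonneg him
          (fun _ _ _ => ENNReal.toReal_nonneg)
    _ = ∑ q ∈ SA, ∑ _v ∈ nbr q.1, mV q := Finset.sum_sigma _ _ _
    _ = ∑ q ∈ SA, (d : ℝ) * mV q := by
        refine Finset.sum_congr rfl fun q _ => ?_
        rw [Finset.sum_const, nsmul_eq_mul, hcard]
    _ = d * edgeLoad A ε2.1 t := by
        rw [← Finset.mul_sum, edgeLoad_eq_sum hA]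

lemma edgeLoad_line_top [Finite V] {A : Sched V} (hA : A.Finite)
    (hs : ∀ v, ¬ E v v) (ε1 ε2 : lineV E) (hlin : lineE E ε1 ε2) :
    edgeLoad (lineSched E A) (ε1, ε2) (tmax A + 1) = 1 := by
  obtain ⟨⟨a, b⟩, hab⟩ := ε1
  obtain ⟨⟨b', c⟩, hbc⟩ := ε2
  have hb : b = b' := hlin
  subst hb
  have hset : {p : Tup (lineV E) | p ∈ lineSched E A ∧
      p.2.2.1 = ((⟨(a, b), hab⟩ : lineV E), (⟨(b, c), hbc⟩ : lineV E)) ∧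
      p.2.2.2 = tmax A + 1} =
      {((⟨(b, c), hbc⟩ : lineV E), shard,
        ((⟨(a, b), hab⟩ : lineV E), (⟨(b, c), hbc⟩ : lineV E)), tmax A + 1)} := by
    ext p
    simp only [Set.mem_setOf_eq, Set.mem_singleton_iff]
    constructor
    · rintro ⟨hmem, hedge, hstep⟩
      rcases hmem with ⟨v, v', w, u, u', C, t₁, hvv', hwu, huu', hq, hne, rfl⟩ |
        ⟨u, v, v', huv, hvv', hne, rfl⟩
      · exfalso
        have h1 : t₁ ≤ tmax A := step_le_tmax hA hq
        have h2 : t₁ = tmax A + 1 := hstep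
        omega
      · simp only [Prod.mk.injEq] at hedge
        obtain ⟨he1, he2⟩ := Prod.mk.inj hedge
        rw [he1, he2]
        exact Set.mem_singleton _
    · rintro rfl
      refine ⟨Or.inr ⟨a, b, c, hab, hbc, ?_, rfl⟩, rfl, rfl⟩
      intro h
      simp only [Prod.mk.injEq] at h
      obtain ⟨h1, h2⟩ := h
      subst h1
      exact hs a hab
  rw [edgeLoad]
  erw [hset, finsum_mem_singleton]
  exact volume_shard_toReal

lemma sSup_loads_nonneg {A : Sched V} (hA : A.Finite) (P : Set (V × V)) (t : ℕ) :
    0 ≤ sSup ((fun e => edgeLoad A e t) '' P) := by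
  apply Real.sSup_nonneg
  rintro x ⟨e, -, rfl⟩
  exact edgeLoad_nonneg hA e t

lemma loads_bddAbove [Finite V] (A : Sched V) (P : Set (V × V)) (t : ℕ) :
    BddAbove ((fun e => edgeLoad A e t) '' P) :=
  (P.toFinite.image _).bddAbove

lemma stepT_line_le [Finite V] [Nonempty V] {A : Sched V} (hA : A.Finite)
    (hreg : IsRegular E d) (hd : 1 ≤ d) {M B : ℝ} (hM : 0 ≤ M) (hB : 0 < B)
    {t : ℕ} (ht : t ≤ tmax A) :
    stepT (lineE E) d M B (lineSched E A) t ≤ stepT E d M B A t := by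
  have hN : 0 < (Nat.card V : ℝ) := by
    have := Nat.card_pos (α := V)
    exact_mod_cast this
  have hd0 : (0 : ℝ) < d := by exact_mod_cast Nat.lt_of_lt_of_le Nat.zero_lt_one hd
  set S := sSup ((fun e => edgeLoad A e t) '' {e : V × V | E e.1 e.2}) with hSdef
  have hS0 : 0 ≤ S := sSup_loads_nonneg hA _ t
  set SL := sSup ((fun e => edgeLoad (lineSched E A) e t) ''
    {e : lineV E × lineV E | lineE E e.1 e.2}) with hSLdef
  have hkey : SL ≤ d * S := by
    rw [hSLdef]
    apply Real.sSup_le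
    · rintro x ⟨⟨ε1, ε2⟩, -, rfl⟩
      calc edgeLoad (lineSched E A) (ε1, ε2) t ≤ d * edgeLoad A ε2.1 t :=
            edgeLoad_line_le hA hreg ε1 ε2 ht
        _ ≤ d * S := by
            apply mul_le_mul_of_nonneg_left _ (le_of_lt hd0)
            exact le_csSup (loads_bddAbove A _ t) ⟨ε2.1, ε2.2, rfl⟩
    · positivity
  rw [stepT, stepT, card_lineV hreg, ← hSdef, ← hSLdef]
  push_cast
  calc ((d : ℝ) / B) * (M / ((d : ℝ) * (Nat.card V : ℝ))) * SL
      ≤ ((d : ℝ) / B) * (M / ((d : ℝ) * (Nat.card V : ℝ))) * ((d : ℝ) * S) := by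
        apply mul_le_mul_of_nonneg_left hkey (by positivity)
    _ = ((d : ℝ) / B) * (M / (Nat.card V : ℝ)) * S := by
        field_simp

lemma stepT_line_top [Finite V] [Nonempty V] {A : Sched V} (hA : A.Finite)
    (hreg : IsRegular E d) (hd : 1 ≤ d) (hs : ∀ v, ¬ E v v) (M B : ℝ)
    (hB : 0 < B) :
    stepT (lineE E) d M B (lineSched E A) (tmax A + 1) =
      M / (B * (Nat.card V : ℝ)) := by
  have hN : 0 < (Nat.card V : ℝ) := by
    have := Nat.card_pos (α := V)
    exact_mod_cast this
  have hd0 : (0 : ℝ) < d := by exact_mod_cast Nat.lt_of_lt_of_le Nat.zero_lt_one hd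
  have himg : (fun e => edgeLoad (lineSched E A) e (tmax A + 1)) ''
      {e : lineV E × lineV E | lineE E e.1 e.2} = {1} := by
    apply Set.Subset.antisymm
    · rintro x ⟨⟨ε1, ε2⟩, he, rfl⟩
      exact edgeLoad_line_top hA hs ε1 ε2 he
    · rintro x hx
      rw [Set.mem_singleton_iff] at hx
      subst hx
      obtain ⟨u, v, v', huv, hvv', hne⟩ := exists_two_walk hreg hd hs
      refine ⟨((⟨(u, v), huv⟩ : lineV E), (⟨(v, v'), hvv'⟩ : lineV E)), rfl, ?_⟩
      have h1 : edgeLoad (lineSched E A)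
          ((⟨(u, v), huv⟩ : lineV E), (⟨(v, v'), hvv'⟩ : lineV E)) (tmax A + 1) = 1 :=
        edgeLoad_line_top hA hs ⟨(u, v), huv⟩ ⟨(v, v'), hvv'⟩ rfl
      exact h1
  rw [stepT, card_lineV hreg, himg, csSup_singleton]
  push_cast
  field_simp

lemma bwT_line_le [Finite V] [Nonempty V] {A : Sched V} (hA : A.Finite)
    (hreg : IsRegular E d) (hd : 1 ≤ d) (hs : ∀ v, ¬ E v v)
    {M B : ℝ} (hM : 0 ≤ M) (hB : 0 < B) :
    bwT (lineE E) d M B (lineSched E A) ≤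
      bwT E d M B A + M / (B * (Nat.card V : ℝ)) := by
  rw [bwT, bwT, tmax_lineSched hA hreg hd hs,
    Finset.sum_Icc_succ_top (by omega : 1 ≤ tmax A + 1),
    stepT_line_top hA hreg hd hs M B hB]
  apply add_le_add_left
  apply Finset.sum_le_sum
  intro t htmem
  exact stepT_line_le hA hreg hd hM hB (Finset.mem_Icc.mp htmem).2

lemma two_le_card [Finite V] [Nonempty V] (hreg : IsRegular E d) (hd : 2 ≤ d) :
    2 ≤ Nat.card V := by
  obtain ⟨v⟩ := ‹Nonempty V›
  have h := (hreg v).1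
  have hle : {w | E v w}.ncard ≤ Nat.card V := by
    rw [← Set.ncard_univ]
    exact Set.ncard_le_ncard (Set.subset_univ _) Set.finite_univ
  omega

end Aux

/-- if `(G,A_G)` is a bandwidth optimal reduce-scatter algorithm on a simple
`d`-regular digraph with `N` vertices, then for every `n ≥ 0` the `n`-fold line-graph
expansion is within a factor `1 + 1/((d−1)N)` of the optimal bandwidth runtime on
`d^n·N` nodes. -/
theorem iterated_line_graph_bw_ratio (G : Alg) [Finite G.V] (d : ℕ) (hd : 2 ≤ d)
    (hsimple : ∀ v : G.V, ¬ G.E v v) (hreg : IsRegular G.E d) (hA : IsSched G.E G.A)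
    (hRS : IsReduceScatter G.A) (M B : ℝ) (hM : 0 < M) (hB : 0 < B)
    (hopt : bwT G.E d M B G.A
      = (M / B) * (((Nat.card G.V : ℝ) - 1) / (Nat.card G.V : ℝ)))
    (n : ℕ) :
    bwT (lineAlg^[n] G).E d M B (lineAlg^[n] G).A /
        ((M / B) * (((d : ℝ) ^ n * (Nat.card G.V : ℝ) - 1) /
          ((d : ℝ) ^ n * (Nat.card G.V : ℝ))))
      ≤ 1 + 1 / (((d : ℝ) - 1) * (Nat.card G.V : ℝ)) := by
  rcases isEmpty_or_nonempty G.V with hemp | hne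
  · haveI := hemp
    have h0 : ((Nat.card G.V : ℝ)) = 0 := by
      rw [Nat.card_of_isEmpty]; norm_num
    simp only [h0, mul_zero, div_zero]
    norm_num
  · have hNcard : 2 ≤ Nat.card G.V := two_le_card hreg hd
    have hDR : (2 : ℝ) ≤ (d : ℝ) := by exact_mod_cast hd
    set N : ℝ := (Nat.card G.V : ℝ) with hNdef
    have hNR : (2 : ℝ) ≤ N := by rw [hNdef]; exact_mod_cast hNcard
    have hD1 : (0 : ℝ) < (d : ℝ) - 1 := by linarith
    have hN0 : (0 : ℝ) < N := by linarith
    have hD0 : (0 : ℝ) < (d : ℝ) := by linarith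
    have main : ∀ k : ℕ, Finite (lineAlg^[k] G).V ∧ Nonempty (lineAlg^[k] G).V ∧
        (∀ v, ¬ (lineAlg^[k] G).E v v) ∧ IsRegular (lineAlg^[k] G).E d ∧
        ((lineAlg^[k] G).A).Finite ∧
        Nat.card (lineAlg^[k] G).V = d ^ k * Nat.card G.V ∧
        bwT (lineAlg^[k] G).E d M B (lineAlg^[k] G).A ≤
          (M / B) * (1 + 1 / (((d : ℝ) - 1) * N)
            - (d : ℝ) * (1 / (d : ℝ)) ^ k / (((d : ℝ) - 1) * N)) := by
      intro k
      induction k with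
      | zero =>
        simp only [Function.iterate_zero, id_eq, pow_zero, one_mul]
        refine ⟨inferInstance, hne, hsimple, hreg, hA.1, trivial, ?_⟩
        rw [hopt]
        apply le_of_eq
        have h2 : (d : ℝ) - 1 ≠ 0 := by linarith
        have h3 : N ≠ 0 := by linarith
        congr 1
        field_simp
        ring
      | succ k ih =>
        obtain ⟨hFin, hNe, hSimp, hReg, hAfin, hCard, hBw⟩ := ih
        haveI := hFin
        haveI := hNe
        have hd1 : 1 ≤ d := by omega
        have hCast : ((Nat.card (lineAlg^[k] G).V : ℝ)) = (d : ℝ) ^ k * N := by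
          rw [hCard]; push_cast; rw [hNdef]
        rw [Function.iterate_succ_apply']
        refine ⟨?_, ?_, ?_, ?_, ?_, ?_, ?_⟩
        · show Finite (lineV (lineAlg^[k] G).E); infer_instance
        · exact lineV_nonempty hReg hd1
        · exact line_simple hSimp
        · exact line_regular hReg
        · exact lineSched_finite hAfin
        · show Nat.card (lineV (lineAlg^[k] G).E) = d ^ (k + 1) * Nat.card G.V
          rw [card_lineV hReg, hCard]; ring
        · have hDk : ((d : ℝ)) ^ k ≠ 0 := by positivity
          have h1 : ((d : ℝ)) ≠ 0 := by linarith
          have h2 : (d : ℝ) - 1 ≠ 0 := by linarith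
          have h3 : N ≠ 0 := by linarith
          calc bwT (lineAlg (lineAlg^[k] G)).E d M B (lineAlg (lineAlg^[k] G)).A
              ≤ bwT (lineAlg^[k] G).E d M B (lineAlg^[k] G).A +
                M / (B * ((Nat.card (lineAlg^[k] G).V : ℝ))) :=
              bwT_line_le hAfin hReg hd1 hSimp hM.le hB
            _ ≤ (M / B) * (1 + 1 / (((d : ℝ) - 1) * N)
                  - (d : ℝ) * (1 / (d : ℝ)) ^ k / (((d : ℝ) - 1) * N))
                + M / (B * ((d : ℝ) ^ k * N)) := by
                apply add_le_add hBw
                rw [hCast]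
            _ = (M / B) * (1 + 1 / (((d : ℝ) - 1) * N)
                  - (d : ℝ) * (1 / (d : ℝ)) ^ (k + 1) / (((d : ℝ) - 1) * N)) := by
                simp only [one_div, inv_pow]
                field_simp
                ring
    obtain ⟨hFin, hNe, -, -, -, hCard, hBw⟩ := main n
    have h1 : ((d : ℝ)) ≠ 0 := by linarith
    have h2 : (d : ℝ) - 1 ≠ 0 := by linarith
    have h3 : N ≠ 0 := by linarith
    have hP1 : (1 : ℝ) ≤ (d : ℝ) ^ n := one_le_pow₀ (by linarith)
    have hPN : (0 : ℝ) < (d : ℝ) ^ n * N := by positivity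
    have hPN1 : (1 : ℝ) < (d : ℝ) ^ n * N := by nlinarith
    have hDen : 0 < (M / B) * (((d : ℝ) ^ n * N - 1) / ((d : ℝ) ^ n * N)) := by
      apply mul_pos (div_pos hM hB)
      exact div_pos (by linarith) hPN
    rw [div_le_iff₀ hDen]
    have key : (1 + 1 / (((d : ℝ) - 1) * N)) * (((d : ℝ) ^ n * N - 1) / ((d : ℝ) ^ n * N))
        - (1 + 1 / (((d : ℝ) - 1) * N)
            - (d : ℝ) * (1 / (d : ℝ)) ^ n / (((d : ℝ) - 1) * N))
        = (N - 1) / (((d : ℝ) - 1) * N ^ 2 * (d : ℝ) ^ n) := by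
      have h4 : ((d : ℝ)) ^ n ≠ 0 := by positivity
      simp only [one_div, inv_pow]
      field_simp
      ring
    have hpos2 : 0 ≤ (N - 1) / (((d : ℝ) - 1) * N ^ 2 * (d : ℝ) ^ n) :=
      div_nonneg (by linarith) (by positivity)
    have hMB : (0 : ℝ) ≤ M / B := (div_pos hM hB).le
    calc bwT (lineAlg^[n] G).E d M B (lineAlg^[n] G).A
        ≤ (M / B) * (1 + 1 / (((d : ℝ) - 1) * N)
            - (d : ℝ) * (1 / (d : ℝ)) ^ n / (((d : ℝ) - 1) * N)) := hBw
      _ ≤ (M / B) * ((1 + 1 / (((d : ℝ) - 1) * N))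
            * (((d : ℝ) ^ n * N - 1) / ((d : ℝ) ^ n * N))) := by
          apply mul_le_mul_of_nonneg_left _ hMB
          linarith
      _ = (1 + 1 / (((d : ℝ) - 1) * N)) *
            ((M / B) * (((d : ℝ) ^ n * N - 1) / ((d : ℝ) ^ n * N))) := by ring


end Collective
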